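/- Let Δ = A₁A₂A₃ be an acute-angled triangle in the Euclidean plane (three affinely independent points all of whose interior angles are strictly less than π/2), and for each i let H_i denote the foot of the altitude from A_i, i.e. the orthogonal projection of A_i onto the line through the other two vertices. Then dist(A₂,A₃)·sin(∠A₂)·sin(∠A₃) = (dist(H₁,H₂) + dist(H₂,H₃) + dist(H₃,H₁))/2, i.e. the invariant T(Δ) equals the semiperimeter of the orthic triangle H₁H₂H₃. -/

import Mathlib

open Real EuclideanGeometry
open scoped RealInnerProductSpace

lemma foot_vec {E : Type*} [NormedAddCommGroup E] [InnerProductSpace ℝ E]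
    (u v : E) (hu : u ≠ 0) (hv : v ≠ 0) (s t : ℝ)
    (hs : ⟪v - s • u, u⟫ = 0) (ht : ⟪u - t • v, v⟫ = 0) :
    ‖s • u - t • v‖ = |Real.cos (InnerProductGeometry.angle u v)| * ‖u - v‖ := by
  have hcu : ⟪u, u⟫ ≠ 0 := fun h => hu (inner_self_eq_zero.1 h)
  have hcv : ⟪v, v⟫ ≠ 0 := fun h => hv (inner_self_eq_zero.1 h)
  have hs' : s = ⟪u, v⟫ / ⟪u, u⟫ := by
    rw [inner_sub_left, real_inner_smul_left, sub_eq_zero, real_inner_comm] at hs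
    field_simp [hs]
    linarith
  have ht' : t = ⟪u, v⟫ / ⟪v, v⟫ := by
    rw [inner_sub_left, real_inner_smul_left, sub_eq_zero] at ht
    field_simp [ht]
    linarith
  subst hs' ht'
  have hsq : ‖(⟪u, v⟫ / ⟪u, u⟫) • u - (⟪u, v⟫ / ⟪v, v⟫) • v‖ ^ 2 =
      (|Real.cos (InnerProductGeometry.angle u v)| * ‖u - v‖) ^ 2 := by
    rw [mul_pow, sq_abs, InnerProductGeometry.cos_angle, div_pow, mul_pow,
      ← real_inner_self_eq_norm_sq, ← real_inner_self_eq_norm_sq,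
      ← real_inner_self_eq_norm_sq, ← real_inner_self_eq_norm_sq]
    simp only [inner_sub_left, inner_sub_right, real_inner_smul_left, real_inner_smul_right,
      real_inner_comm v u]
    field_simp
    ring
  calc ‖(⟪u, v⟫ / ⟪u, u⟫) • u - (⟪u, v⟫ / ⟪v, v⟫) • v‖
      = √(‖(⟪u, v⟫ / ⟪u, u⟫) • u - (⟪u, v⟫ / ⟪v, v⟫) • v‖ ^ 2) :=
        (Real.sqrt_sq (norm_nonneg _)).symm
    _ = _ := by rw [hsq, Real.sqrt_sq (by positivity)]

lemma foot_dist (O X Y P Q : EuclideanSpace ℝ (Fin 2)) (hX : X ≠ O) (hY : Y ≠ O)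
    (hP : P ∈ affineSpan ℝ ({O, X} : Set (EuclideanSpace ℝ (Fin 2))))
    (hPp : ⟪Y - P, X - O⟫ = 0)
    (hQ : Q ∈ affineSpan ℝ ({O, Y} : Set (EuclideanSpace ℝ (Fin 2))))
    (hQp : ⟪X - Q, Y - O⟫ = 0) :
    dist P Q = |Real.cos (∠ X O Y)| * dist X Y := by
  obtain ⟨s, hs⟩ : ∃ s : ℝ, s • (X - O) = P - O := by
    have h := vadd_left_mem_affineSpan_pair.1
      (show (P -ᵥ O) +ᵥ O ∈ line[ℝ, O, X] by rwa [vsub_vadd])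
    simpa [vsub_eq_sub] using h
  obtain ⟨t, ht⟩ : ∃ t : ℝ, t • (Y - O) = Q - O := by
    have h := vadd_left_mem_affineSpan_pair.1
      (show (Q -ᵥ O) +ᵥ O ∈ line[ℝ, O, Y] by rwa [vsub_vadd])
    simpa [vsub_eq_sub] using h
  have hu : X - O ≠ 0 := sub_ne_zero.2 hX
  have hv : Y - O ≠ 0 := sub_ne_zero.2 hY
  have hPp' : ⟪(Y - O) - s • (X - O), X - O⟫ = 0 := by
    rw [hs]; rw [show Y - O - (P - O) = Y - P by abel]; exact hPp
  have hQp' : ⟪(X - O) - t • (Y - O), Y - O⟫ = 0 := by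
    rw [ht]; rw [show X - O - (Q - O) = X - Q by abel]; exact hQp
  have key := foot_vec (X - O) (Y - O) hu hv s t hPp' hQp'
  have h1 : dist P Q = ‖s • (X - O) - t • (Y - O)‖ := by
    rw [hs, ht, dist_eq_norm, show P - O - (Q - O) = P - Q by abel]
  have h2 : ∠ X O Y = InnerProductGeometry.angle (X - O) (Y - O) := rfl
  have h3 : dist X Y = ‖(X - O) - (Y - O)‖ := by
    rw [dist_eq_norm, show X - O - (Y - O) = X - Y by abel]
  rw [h1, h2, h3, key]

lemma law_sin_aux (P₁ P₂ P₃ : EuclideanSpace ℝ (Fin 2)) :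
    Real.sin (∠ P₂ P₁ P₃) * (dist P₁ P₂ * dist P₁ P₃) =
    Real.sin (∠ P₁ P₂ P₃) * (dist P₂ P₁ * dist P₂ P₃) := by
  have e1 : ∠ P₂ P₁ P₃ = InnerProductGeometry.angle (P₂ - P₁) (P₃ - P₁) := rfl
  have e2 : ∠ P₁ P₂ P₃ = InnerProductGeometry.angle (P₁ - P₂) (P₃ - P₂) := rfl
  rw [e1, e2, dist_eq_norm' P₁ P₂, dist_eq_norm' P₁ P₃, dist_eq_norm' P₂ P₁, dist_eq_norm' P₂ P₃,
    InnerProductGeometry.sin_angle_mul_norm_mul_norm,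
    InnerProductGeometry.sin_angle_mul_norm_mul_norm]
  congr 1
  have h : P₁ - P₂ = -(P₂ - P₁) := by abel
  have h2 : P₃ - P₂ = (P₃ - P₁) - (P₂ - P₁) := by abel
  rw [h, h2]
  simp only [inner_sub_left, inner_sub_right, inner_neg_left, inner_neg_right,
    real_inner_comm (P₃ - P₁) (P₂ - P₁), real_inner_comm P₂ P₁, real_inner_comm P₃ P₁,
    real_inner_comm P₃ P₂]
  ring

/-- For an acute-angled triangle `A₁A₂A₃`, the invariant
`T(Δ) = dist A₂ A₃ · sin(∠A₂) · sin(∠A₃)` equals the semiperimeter of the orthic triangle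
`H₁H₂H₃` formed by the feet of the altitudes. -/
theorem triangle_invariant_eq_orthic_semiperimeter
    (A₁ A₂ A₃ H₁ H₂ H₃ : EuclideanSpace ℝ (Fin 2))
    (hind : AffineIndependent ℝ ![A₁, A₂, A₃])
    (hacute₁ : ∠ A₂ A₁ A₃ < π / 2)
    (hacute₂ : ∠ A₁ A₂ A₃ < π / 2)
    (hacute₃ : ∠ A₂ A₃ A₁ < π / 2)
    (hH₁mem : H₁ ∈ affineSpan ℝ ({A₂, A₃} : Set (EuclideanSpace ℝ (Fin 2))))
    (hH₁perp : ⟪A₁ - H₁, A₃ - A₂⟫ = 0)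
    (hH₂mem : H₂ ∈ affineSpan ℝ ({A₁, A₃} : Set (EuclideanSpace ℝ (Fin 2))))
    (hH₂perp : ⟪A₂ - H₂, A₃ - A₁⟫ = 0)
    (hH₃mem : H₃ ∈ affineSpan ℝ ({A₁, A₂} : Set (EuclideanSpace ℝ (Fin 2))))
    (hH₃perp : ⟪A₃ - H₃, A₂ - A₁⟫ = 0) :
    dist A₂ A₃ * Real.sin (∠ A₁ A₂ A₃) * Real.sin (∠ A₂ A₃ A₁) =
      (dist H₁ H₂ + dist H₂ H₃ + dist H₃ H₁) / 2 := by
  -- distinctness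
  have hinj := hind.injective
  have h12 : A₁ ≠ A₂ := fun h => absurd (hinj (show ![A₁,A₂,A₃] 0 = ![A₁,A₂,A₃] 1 by simpa using h)) (by decide)
  have h13 : A₁ ≠ A₃ := fun h => absurd (hinj (show ![A₁,A₂,A₃] 0 = ![A₁,A₂,A₃] 2 by simpa using h)) (by decide)
  have h23 : A₂ ≠ A₃ := fun h => absurd (hinj (show ![A₁,A₂,A₃] 1 = ![A₁,A₂,A₃] 2 by simpa using h)) (by decide)
  -- non-collinearity
  have hnc : ¬Collinear ℝ ({A₁, A₂, A₃} : Set (EuclideanSpace ℝ (Fin 2))) :=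
    affineIndependent_iff_not_collinear_set.mp hind
  have hset1 : ({A₂, A₁, A₃} : Set (EuclideanSpace ℝ (Fin 2))) = {A₁, A₂, A₃} := by
    ext x; simp; tauto
  have hset3 : ({A₂, A₃, A₁} : Set (EuclideanSpace ℝ (Fin 2))) = {A₁, A₂, A₃} := by
    ext x; simp; tauto
  have hnc1 : ¬Collinear ℝ ({A₂, A₁, A₃} : Set (EuclideanSpace ℝ (Fin 2))) := by rwa [hset1]
  have hnc3 : ¬Collinear ℝ ({A₂, A₃, A₁} : Set (EuclideanSpace ℝ (Fin 2))) := by rwa [hset3]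
  -- sines positive
  have hsα : 0 < Real.sin (∠ A₂ A₁ A₃) :=
    Real.sin_pos_of_pos_of_lt_pi (angle_pos_of_not_collinear hnc1) (angle_lt_pi_of_not_collinear hnc1)
  have hsβ : 0 < Real.sin (∠ A₁ A₂ A₃) :=
    Real.sin_pos_of_pos_of_lt_pi (angle_pos_of_not_collinear hnc) (angle_lt_pi_of_not_collinear hnc)
  have hsγ : 0 < Real.sin (∠ A₂ A₃ A₁) :=
    Real.sin_pos_of_pos_of_lt_pi (angle_pos_of_not_collinear hnc3) (angle_lt_pi_of_not_collinear hnc3)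
  -- cosines nonneg
  have hcα : 0 ≤ Real.cos (∠ A₂ A₁ A₃) :=
    Real.cos_nonneg_of_mem_Icc ⟨by linarith [angle_nonneg A₂ A₁ A₃, Real.pi_pos], le_of_lt hacute₁⟩
  have hcβ : 0 ≤ Real.cos (∠ A₁ A₂ A₃) :=
    Real.cos_nonneg_of_mem_Icc ⟨by linarith [angle_nonneg A₁ A₂ A₃, Real.pi_pos], le_of_lt hacute₂⟩
  have hcγ : 0 ≤ Real.cos (∠ A₂ A₃ A₁) :=
    Real.cos_nonneg_of_mem_Icc ⟨by linarith [angle_nonneg A₂ A₃ A₁, Real.pi_pos], le_of_lt hacute₃⟩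
  -- feet distances
  have hH₃mem' : H₃ ∈ affineSpan ℝ ({A₂, A₁} : Set (EuclideanSpace ℝ (Fin 2))) := by
    rwa [Set.pair_comm]
  have hH₁mem' : H₁ ∈ affineSpan ℝ ({A₃, A₂} : Set (EuclideanSpace ℝ (Fin 2))) := by
    rwa [Set.pair_comm]
  have hH₂mem' : H₂ ∈ affineSpan ℝ ({A₃, A₁} : Set (EuclideanSpace ℝ (Fin 2))) := by
    rwa [Set.pair_comm]
  have hH₃perp' : ⟪A₃ - H₃, A₁ - A₂⟫ = 0 := by
    rw [show A₁ - A₂ = -(A₂ - A₁) by abel, inner_neg_right, hH₃perp, neg_zero]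
  have hH₁perp' : ⟪A₁ - H₁, A₂ - A₃⟫ = 0 := by
    rw [show A₂ - A₃ = -(A₃ - A₂) by abel, inner_neg_right, hH₁perp, neg_zero]
  have hH₂perp' : ⟪A₂ - H₂, A₁ - A₃⟫ = 0 := by
    rw [show A₁ - A₃ = -(A₃ - A₁) by abel, inner_neg_right, hH₂perp, neg_zero]
  have F1 : dist H₂ H₃ = Real.cos (∠ A₂ A₁ A₃) * dist A₂ A₃ := by
    have := foot_dist A₁ A₃ A₂ H₂ H₃ (Ne.symm h13) (Ne.symm h12) hH₂mem hH₂perp hH₃mem hH₃perp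
    rwa [angle_comm A₃ A₁ A₂, dist_comm A₃ A₂, abs_of_nonneg hcα] at this
  have F2 : dist H₃ H₁ = Real.cos (∠ A₁ A₂ A₃) * dist A₁ A₃ := by
    have := foot_dist A₂ A₁ A₃ H₃ H₁ h12.symm.symm (Ne.symm h23.symm).symm hH₃mem' hH₃perp' hH₁mem hH₁perp
    rwa [abs_of_nonneg hcβ] at this
  have F3 : dist H₁ H₂ = Real.cos (∠ A₂ A₃ A₁) * dist A₂ A₁ := by
    have := foot_dist A₃ A₂ A₁ H₁ H₂ h23 h13 hH₁mem' hH₁perp' hH₂mem' hH₂perp'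
    rwa [abs_of_nonneg hcγ] at this
  -- law of sines
  have hcpos : (0:ℝ) < dist A₁ A₂ := dist_pos.2 h12
  have hbpos : (0:ℝ) < dist A₁ A₃ := dist_pos.2 h13
  have e1 : Real.sin (∠ A₂ A₁ A₃) * dist A₁ A₃ = Real.sin (∠ A₁ A₂ A₃) * dist A₂ A₃ := by
    have h := law_sin_aux A₁ A₂ A₃
    rw [dist_comm A₂ A₁] at h
    exact mul_left_cancel₀ (ne_of_gt hcpos) (by linear_combination h)
  have e2 : Real.sin (∠ A₂ A₃ A₁) * dist A₂ A₃ = Real.sin (∠ A₂ A₁ A₃) * dist A₁ A₂ := by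
    have h := law_sin_aux A₃ A₁ A₂
    rw [angle_comm A₁ A₃ A₂, angle_comm A₃ A₁ A₂, dist_comm A₃ A₁, dist_comm A₃ A₂] at h
    exact mul_left_cancel₀ (ne_of_gt hbpos) (by linear_combination h)
  -- angle sum
  have hsum : ∠ A₁ A₂ A₃ + ∠ A₂ A₃ A₁ + ∠ A₂ A₁ A₃ = π := by
    have h := angle_add_angle_add_angle_eq_pi (p₁ := A₁) (p₂ := A₂) A₃ (Ne.symm h12)
    rwa [angle_comm A₃ A₁ A₂] at h
  set a := dist A₂ A₃ with ha
  set b := dist A₁ A₃ with hb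
  set c := dist A₁ A₂ with hc
  set sβ := Real.sin (∠ A₁ A₂ A₃) with hsβ'
  set cβ := Real.cos (∠ A₁ A₂ A₃) with hcβ'
  set sγ := Real.sin (∠ A₂ A₃ A₁) with hsγ'
  set cγ := Real.cos (∠ A₂ A₃ A₁) with hcγ'
  have hαeq : ∠ A₂ A₁ A₃ = π - (∠ A₁ A₂ A₃ + ∠ A₂ A₃ A₁) := by linarith
  have hsin : Real.sin (∠ A₂ A₁ A₃) = sβ * cγ + cβ * sγ := by
    rw [hαeq, Real.sin_pi_sub, Real.sin_add]
  have hcos : Real.cos (∠ A₂ A₁ A₃) = sβ * sγ - cβ * cγ := by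
    rw [hαeq, Real.cos_pi_sub, Real.cos_add]; ring
  rw [F1, F2, F3, hcos, dist_comm A₂ A₁]
  rw [hsin] at e1 e2 hsα
  have pythβ := Real.sin_sq_add_cos_sq (∠ A₁ A₂ A₃)
  have pythγ := Real.sin_sq_add_cos_sq (∠ A₂ A₃ A₁)
  rw [← hsβ', ← hcβ'] at pythβ
  rw [← hsγ', ← hcγ'] at pythγ
  have key : a * (sβ * sγ + cβ * cγ) = cγ * c + cβ * b := by
    apply mul_right_cancel₀ (b := sβ * cγ + cβ * sγ) (ne_of_gt hsα)
    linear_combination cγ * e2 - cβ * e1 + a*sγ*cγ*pythβ + a*sβ*cβ*pythγ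
  linear_combination key / 2
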